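/- Let α ∈ (0,1), β = √(1−α²), d > 0, and k > (8α+2β)/(9(αβ)^{3/2}). If s > 0 satisfies R(s) = 0 with R(s) = √(s²+k²)·tanh(d√(s²+k²)) + α s^{3/2} − β k²/√s, then (k/2)·√(β/α) < s < k·√(β/α). -/

import Mathlib

lemma tanh_lt_one' (x : ℝ) : Real.tanh x < 1 := by
  rw [Real.tanh_eq_sinh_div_cosh, div_lt_one (Real.cosh_pos x)]
  exact Real.sinh_lt_cosh x

lemma tanh_pos' (x : ℝ) (hx : 0 < x) : 0 < Real.tanh x := by
  rw [Real.tanh_eq_sinh_div_cosh]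
  exact div_pos (Real.sinh_pos_iff.mpr hx) (Real.cosh_pos x)

lemma rpow32 (x : ℝ) (hx : 0 < x) : x ^ ((3 : ℝ) / 2) = x * Real.sqrt x := by
  rw [show (3 : ℝ) / 2 = 1 + 1 / 2 by norm_num, Real.rpow_add hx, Real.rpow_one,
    Real.sqrt_eq_rpow]

set_option maxHeartbeats 1000000 in
theorem stmt_5 (k d α : ℝ) (hd : 0 < d) (hα0 : 0 < α) (hα1 : α < 1)
    (β : ℝ) (hβ : β = Real.sqrt (1 - α ^ 2))
    (hk : k > (8 * α + 2 * β) / (9 * (α * β) ^ ((3 : ℝ) / 2)))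
    (s : ℝ) (hs : 0 < s)
    (hroot : Real.sqrt (s ^ 2 + k ^ 2) * Real.tanh (d * Real.sqrt (s ^ 2 + k ^ 2))
        + α * s ^ ((3 : ℝ) / 2) - β * k ^ 2 / Real.sqrt s = 0) :
    k / 2 * Real.sqrt (β / α) < s ∧ s < k * Real.sqrt (β / α) := by
  have hβpos : 0 < β := by
    rw [hβ]; exact Real.sqrt_pos.mpr (by nlinarith)
  set q := Real.sqrt (α * β) with hqdef
  have hαβ : 0 < α * β := mul_pos hα0 hβpos
  have hqpos : 0 < q := Real.sqrt_pos.mpr hαβ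
  have hq2 : q ^ 2 = α * β := Real.sq_sqrt hαβ.le
  have hk0 : 0 < k := by
    have hD : 0 < 9 * (α * β) ^ ((3 : ℝ) / 2) := by positivity
    exact lt_trans (div_pos (by linarith) hD) hk
  have hkq : 8 * α + 2 * β < 9 * (α * β * q) * k := by
    have hD : 0 < 9 * (α * β) ^ ((3 : ℝ) / 2) := by positivity
    have h := (div_lt_iff₀ hD).mp hk
    rw [rpow32 (α * β) hαβ] at h
    nlinarith [h]
  have hsqba : Real.sqrt (β / α) = q / α := by
    rw [show β / α = (α * β) / α ^ 2 by field_simp, Real.sqrt_div hαβ.le,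
      Real.sqrt_sq hα0.le]
  rw [hsqba]
  rw [rpow32 s hs] at hroot
  have hss : Real.sqrt s > 0 := Real.sqrt_pos.mpr hs
  constructor
  · -- lower bound
    by_contra hcon
    push_neg at hcon
    set s₁ := k / 2 * (q / α) with hs1def
    have hs1pos : 0 < s₁ := by positivity
    set u := Real.sqrt s₁ with hudef
    have hu0 : 0 < u := Real.sqrt_pos.mpr hs1pos
    have hu2 : u ^ 2 = s₁ := Real.sq_sqrt hs1pos.le
    -- term 1 bound
    have hA : Real.sqrt (s ^ 2 + k ^ 2) ≤ Real.sqrt (s₁ ^ 2 + k ^ 2) :=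
      Real.sqrt_le_sqrt (by nlinarith)
    have ht1 : Real.sqrt (s ^ 2 + k ^ 2) * Real.tanh (d * Real.sqrt (s ^ 2 + k ^ 2))
        ≤ Real.sqrt (s₁ ^ 2 + k ^ 2) := by
      have h1 : Real.sqrt (s ^ 2 + k ^ 2) * Real.tanh (d * Real.sqrt (s ^ 2 + k ^ 2))
          ≤ Real.sqrt (s ^ 2 + k ^ 2) * 1 := by
        apply mul_le_mul_of_nonneg_left (tanh_lt_one' _).le (Real.sqrt_nonneg _)
      linarith
    -- term 2 bound
    have hsqs : Real.sqrt s ≤ u := Real.sqrt_le_sqrt hcon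
    have ht2 : α * (s * Real.sqrt s) ≤ α * (s₁ * u) := by
      have : s * Real.sqrt s ≤ s₁ * u :=
        mul_le_mul hcon hsqs (Real.sqrt_nonneg s) hs1pos.le
      nlinarith
    -- term 3 bound
    have ht3 : β * k ^ 2 / u ≤ β * k ^ 2 / Real.sqrt s := by
      gcongr
    -- key strict inequality
    have hs1sq : α * s₁ ^ 2 = k ^ 2 * β / 4 := by
      have h1 : α * s₁ ^ 2 = k ^ 2 * q ^ 2 / (4 * α) := by
        rw [hs1def]; field_simp; ring
      rw [h1, hq2]; field_simp
    have hRpos : 0 < β * k ^ 2 / u - α * (s₁ * u) := by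
      rw [sub_pos, lt_div_iff₀ hu0]
      have h2 : α * (s₁ * u) * u = k ^ 2 * β / 4 := by
        linear_combination α * s₁ * hu2 + hs1sq
      rw [h2]
      have hkb : 0 < k ^ 2 * β := by positivity
      linarith
    have hneed : (s₁ ^ 2 + k ^ 2) * s₁ < (β * k ^ 2 - α * s₁ ^ 2) ^ 2 := by
      have e1 : s₁ = k * q / (2 * α) := by rw [hs1def]; ring
      have e2 : s₁ ^ 2 = k ^ 2 * β / (4 * α) := by
        have h1 : s₁ ^ 2 = k ^ 2 * q ^ 2 / (4 * α ^ 2) := by rw [e1]; ring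
        rw [h1, hq2]; field_simp
      have e3 : β * k ^ 2 - α * s₁ ^ 2 = 3 * β * k ^ 2 / 4 := by
        linear_combination -hs1sq
      have hmul : q * k ^ 3 * (8 * α + 2 * β) < q * k ^ 3 * (9 * (α * β * q) * k) :=
        mul_lt_mul_of_pos_left hkq (by positivity)
      rw [e3, e2, e1]
      have hα2 : (0:ℝ) < α ^ 2 := by positivity
      rw [div_add' _ _ _ (by positivity : (4:ℝ)*α ≠ 0)]
      rw [div_mul_div_comm, div_pow, div_lt_div_iff₀ (by positivity) (by positivity)]
      have hmul2 : q * k ^ 3 * (8 * α + 2 * β) < 9 * α ^ 2 * β ^ 2 * k ^ 4 := by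
        calc q * k ^ 3 * (8 * α + 2 * β) < q * k ^ 3 * (9 * (α * β * q) * k) := hmul
          _ = 9 * α ^ 2 * β ^ 2 * k ^ 4 := by linear_combination 9 * α * β * k ^ 4 * hq2
      nlinarith [hmul2]
    have hkey : Real.sqrt (s₁ ^ 2 + k ^ 2) < β * k ^ 2 / u - α * (s₁ * u) := by
      rw [Real.sqrt_lt' hRpos]
      have hexp : (β * k ^ 2 / u - α * (s₁ * u)) ^ 2
          = (β * k ^ 2 - α * s₁ ^ 2) ^ 2 / s₁ := by
        rw [← hu2]
        field_simp
        try ring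
      rw [hexp, lt_div_iff₀ hs1pos]
      exact hneed
    linarith
  · -- upper bound
    by_contra hcon
    push_neg at hcon
    set s₂ := k * (q / α) with hs2def
    have hs2pos : 0 < s₂ := by positivity
    set u := Real.sqrt s₂ with hudef
    have hu0 : 0 < u := Real.sqrt_pos.mpr hs2pos
    have hu2 : u ^ 2 = s₂ := Real.sq_sqrt hs2pos.le
    have ht1 : 0 < Real.sqrt (s ^ 2 + k ^ 2) * Real.tanh (d * Real.sqrt (s ^ 2 + k ^ 2)) := by
      have hApos : 0 < Real.sqrt (s ^ 2 + k ^ 2) := Real.sqrt_pos.mpr (by positivity)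
      exact mul_pos hApos (tanh_pos' _ (mul_pos hd hApos))
    have hsqs : u ≤ Real.sqrt s := Real.sqrt_le_sqrt hcon
    have ht2 : α * (s₂ * u) ≤ α * (s * Real.sqrt s) := by
      have : s₂ * u ≤ s * Real.sqrt s :=
        mul_le_mul hcon hsqs hu0.le hs.le
      nlinarith
    have ht3 : β * k ^ 2 / Real.sqrt s ≤ β * k ^ 2 / u := by
      gcongr
    have hident : α * (s₂ * u) = β * k ^ 2 / u := by
      rw [eq_div_iff hu0.ne']
      have hs2sq : α * s₂ ^ 2 = k ^ 2 * β := by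
        have h1 : α * s₂ ^ 2 = k ^ 2 * q ^ 2 / α := by
          rw [hs2def]; field_simp
        rw [h1, hq2]; field_simp
      linear_combination α * s₂ * hu2 + hs2sq
    linarith
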